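/- Any two ∞-adic odometers are topologically conjugate. That is, if α, β ∈ (ℕ \ {1})^ℕ are such that for every prime p there are infinitely many indices i with p dividing α(i), and likewise for β, then (Δ_α, φ_α) and (Δ_β, φ_β) are topologically conjugate. -/

import Mathlib

open Set

/-- Successor mod m on Fin m. -/
def finSucc {m : ℕ} (x : Fin m) : Fin m := ⟨(x.val + 1) % m, Nat.mod_lt _ x.pos⟩

/-- Auxiliary recursion defining the add-one-with-carry map on Δ_α = Π i, Fin (α i). -/
def phiAux (α : ℕ → ℕ) (x : ∀ i, Fin (α i)) : (i : ℕ) → Fin (α i)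
  | 0 => finSucc (x 0)
  | i + 1 => if (x i).val ≤ (phiAux α x i).val then x (i + 1) else finSucc (x (i + 1))

/-- The adding machine (odometer) map φ_α on Δ_α = Π i, Fin (α i). -/
def phi (α : ℕ → ℕ) (x : ∀ i, Fin (α i)) : ∀ i, Fin (α i) := fun i => phiAux α x i

namespace Stmt8

def Qp (α : ℕ → ℕ) (k : ℕ) : ℕ := ∏ i ∈ Finset.range k, α i

def valp (α : ℕ → ℕ) (x : ∀ i, Fin (α i)) (k : ℕ) : ℕ :=
  ∑ i ∈ Finset.range k, (x i).val * Qp α i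

variable {α : ℕ → ℕ}

lemma Qp_pos (hα : ∀ i, 0 < α i) (k : ℕ) : 0 < Qp α k :=
  Finset.prod_pos fun i _ => hα i

lemma Qp_succ (k : ℕ) : Qp α (k + 1) = Qp α k * α k := Finset.prod_range_succ _ _

lemma Qp_dvd {k k' : ℕ} (h : k ≤ k') : Qp α k ∣ Qp α k' :=
  Finset.prod_dvd_prod_of_subset _ _ _ (Finset.range_subset_range.2 h)

lemma valp_succ (x : ∀ i, Fin (α i)) (k : ℕ) :
    valp α x (k + 1) = valp α x k + (x k).val * Qp α k := Finset.sum_range_succ _ _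

lemma valp_lt (hα : ∀ i, 0 < α i) (x : ∀ i, Fin (α i)) : ∀ k, valp α x k < Qp α k
  | 0 => by simp [valp, Qp]
  | (k + 1) => by
    have h1 := valp_lt hα x k
    have h2 : (x k).val + 1 ≤ α k := (x k).isLt
    calc valp α x (k + 1) = valp α x k + (x k).val * Qp α k := valp_succ x k
      _ < Qp α k + (x k).val * Qp α k := by omega
      _ = (1 + (x k).val) * Qp α k := by ring
      _ ≤ α k * Qp α k := Nat.mul_le_mul_right _ (by omega)
      _ = Qp α (k + 1) := by rw [Qp_succ]; ring

lemma valp_mod (hα : ∀ i, 0 < α i) (x : ∀ i, Fin (α i)) {k k' : ℕ} (h : k ≤ k') :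
    valp α x k' % Qp α k = valp α x k := by
  induction k', h using Nat.le_induction with
  | base => exact Nat.mod_eq_of_lt (valp_lt hα x k)
  | succ n hn ih =>
    rw [valp_succ]
    obtain ⟨c, hc⟩ : Qp α k ∣ (x n).val * Qp α n :=
      Dvd.dvd.mul_left (Qp_dvd hn) _
    rw [hc, Nat.add_mul_mod_self_left, ih]

lemma digit_eq (hα : ∀ i, 0 < α i) (x : ∀ i, Fin (α i)) (k : ℕ) :
    (x k).val = valp α x (k + 1) / Qp α k := by
  rw [valp_succ, mul_comm, Nat.add_mul_div_left _ _ (Qp_pos hα k),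
    Nat.div_eq_of_lt (valp_lt hα x k), zero_add]

lemma maxed_iff (hα : ∀ i, 0 < α i) (x : ∀ i, Fin (α i)) (k : ℕ) :
    valp α x (k + 1) + 1 = Qp α (k + 1) ↔
      (valp α x k + 1 = Qp α k ∧ (x k).val + 1 = α k) := by
  have h1 := valp_lt hα x k
  have h2 : (x k).val + 1 ≤ α k := (x k).isLt
  have hq := Qp_pos hα k
  rw [valp_succ, Qp_succ]
  constructor
  · intro h
    have hb : (x k).val + 1 = α k := by
      by_contra hb
      have hb' : (x k).val + 2 ≤ α k := by omega
      have : ((x k).val + 1) * Qp α k < Qp α k * α k := by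
        calc ((x k).val + 1) * Qp α k ≤ (α k - 1) * Qp α k :=
              Nat.mul_le_mul_right _ (by omega)
          _ < α k * Qp α k := (Nat.mul_lt_mul_right hq).2 (by omega)
          _ = Qp α k * α k := mul_comm _ _
      nlinarith
    refine ⟨?_, hb⟩
    have h3 : Qp α k * α k = Qp α k * ((x k).val + 1) := congrArg _ hb.symm
    have h4 : Qp α k * ((x k).val + 1) = (x k).val * Qp α k + Qp α k := by ring
    linarith
  · rintro ⟨h1', h2'⟩
    have h3 : Qp α k * α k = Qp α k * ((x k).val + 1) := congrArg _ h2'.symm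
    have h4 : Qp α k * ((x k).val + 1) = (x k).val * Qp α k + Qp α k := by ring
    linarith

lemma phi_eq (hα : ∀ i, 2 ≤ α i) (x : ∀ i, Fin (α i)) : ∀ k,
    phi α x k = if valp α x k + 1 = Qp α k then finSucc (x k) else x k
  | 0 => by
    simp [phi, phiAux, valp, Qp]
  | (k + 1) => by
    have hpos : ∀ i, 0 < α i := fun i => lt_of_lt_of_le two_pos (hα i)
    have ih := phi_eq hα x k
    have hrec : phi α x (k + 1) =
        if (x k).val ≤ (phi α x k).val then x (k + 1) else finSucc (x (k + 1)) := rfl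
    by_cases h : valp α x k + 1 = Qp α k
    · rw [ih, if_pos h] at hrec
      by_cases hb : (x k).val + 1 = α k
      · have hv : (finSucc (x k)).val = 0 := by
          simp only [finSucc]
          rw [hb, Nat.mod_self]
        have hx0 : 0 < (x k).val := by
          have := hα k; omega
        rw [hrec, if_neg (by rw [hv]; omega)]
        rw [if_pos ((maxed_iff hpos x k).2 ⟨h, hb⟩)]
      · have hv : (finSucc (x k)).val = (x k).val + 1 := by
          simp only [finSucc]
          exact Nat.mod_eq_of_lt (by have := (x k).isLt; omega)
        rw [hrec, if_pos (by rw [hv]; omega)]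
        rw [if_neg (fun hc => hb ((maxed_iff hpos x k).1 hc).2)]
    · rw [ih, if_neg h] at hrec
      rw [hrec, if_pos le_rfl]
      rw [if_neg (fun hc => h ((maxed_iff hpos x k).1 hc).1)]

lemma valp_phi (hα : ∀ i, 2 ≤ α i) (x : ∀ i, Fin (α i)) : ∀ k,
    valp α (phi α x) k = (valp α x k + 1) % Qp α k
  | 0 => by simp [valp, Qp]
  | (k + 1) => by
    have hpos : ∀ i, 0 < α i := fun i => lt_of_lt_of_le two_pos (hα i)
    have ih := valp_phi hα x k
    have hq := Qp_pos hpos k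
    have hlt := valp_lt hpos x k
    rw [valp_succ, valp_succ, ih, phi_eq hα x k]
    by_cases h : valp α x k + 1 = Qp α k
    · rw [if_pos h, h, Nat.mod_self]
      by_cases hb : (x k).val + 1 = α k
      · have hv : (finSucc (x k)).val = 0 := by
          simp only [finSucc]
          rw [hb, Nat.mod_self]
        have hm := (maxed_iff hpos x k).2 ⟨h, hb⟩
        rw [valp_succ] at hm
        rw [hv, show valp α x k + (x k).val * Qp α k + 1 = Qp α (k+1) from hm, Nat.mod_self]
        simp
      · have hv : (finSucc (x k)).val = (x k).val + 1 := by
          simp only [finSucc]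
          exact Nat.mod_eq_of_lt (by have := (x k).isLt; omega)
        have hb' : (x k).val + 1 < α k := by have := (x k).isLt; omega
        have hlt2 : valp α x k + (x k).val * Qp α k + 1 < Qp α (k + 1) := by
          have h3 : ((x k).val + 1 + 1) * Qp α k ≤ α k * Qp α k :=
            Nat.mul_le_mul_right _ (by omega)
          have h4 : Qp α (k + 1) = α k * Qp α k := by rw [Qp_succ]; ring
          nlinarith
        rw [hv, Nat.mod_eq_of_lt hlt2]
        have h5 : ((x k).val + 1) * Qp α k = (x k).val * Qp α k + Qp α k := by ring
        omega
    · rw [if_neg h]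
      have h6 : valp α x k + 1 < Qp α k := by omega
      rw [Nat.mod_eq_of_lt h6]
      have h7 : valp α x (k + 1) + 1 < Qp α (k + 1) := by
        have h8 := valp_lt hpos x (k + 1)
        have h9 : valp α x (k + 1) + 1 ≠ Qp α (k + 1) :=
          fun hc => h ((maxed_iff hpos x k).1 hc).1
        omega
      rw [← valp_succ, Nat.mod_eq_of_lt h7]
      rw [valp_succ]; omega

lemma exists_dvd_Ico (hainf : ∀ p : ℕ, p.Prime → {i : ℕ | p ∣ α i}.Infinite) :
    ∀ m : ℕ, 0 < m → ∀ s : ℕ, ∃ n : ℕ, m ∣ ∏ i ∈ Finset.Ico s n, α i := by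
  intro m
  induction m using Nat.strong_induction_on with
  | _ m ih =>
    intro hm s
    rcases eq_or_lt_of_le (show 1 ≤ m from hm) with h1 | h1
    · exact ⟨s, by simp [← h1]⟩
    · have hm1 : m ≠ 1 := by omega
      set p := m.minFac with hp
      have hpp : p.Prime := Nat.minFac_prime hm1
      obtain ⟨i, hi, his⟩ := (hainf p hpp).exists_gt s
      have hdvd : p ∣ m := Nat.minFac_dvd m
      have hlt : m / p < m := Nat.div_lt_self (by omega) hpp.two_le
      have hpos : 0 < m / p := Nat.div_pos (Nat.le_of_dvd (by omega) hdvd) hpp.pos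
      obtain ⟨n, hn⟩ := ih (m / p) hlt hpos (i + 1)
      refine ⟨max n (i + 1), ?_⟩
      have h2 : m / p ∣ ∏ j ∈ Finset.Ico (i + 1) (max n (i + 1)), α j :=
        hn.trans (Finset.prod_dvd_prod_of_subset _ _ _
          (Finset.Ico_subset_Ico le_rfl (le_max_left _ _)))
      have h3 : p * (m / p) ∣ α i * ∏ j ∈ Finset.Ico (i + 1) (max n (i + 1)), α j :=
        mul_dvd_mul hi h2
      have h4 : α i * ∏ j ∈ Finset.Ico (i + 1) (max n (i + 1)), α j =
          ∏ j ∈ Finset.Ico i (max n (i + 1)), α j := by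
        rw [Finset.prod_eq_prod_Ico_succ_bot (by omega : i < max n (i + 1))]
      have h5 : (∏ j ∈ Finset.Ico i (max n (i + 1)), α j) ∣
          ∏ j ∈ Finset.Ico s (max n (i + 1)), α j :=
        Finset.prod_dvd_prod_of_subset _ _ _
          (Finset.Ico_subset_Ico (le_of_lt his) le_rfl)
      rw [Nat.mul_div_cancel' hdvd] at h3
      exact h3.trans (by rw [h4]; exact h5)

lemma exists_mono_N {β : ℕ → ℕ} (hα : ∀ i, 0 < α i)
    (hainf : ∀ p : ℕ, p.Prime → {i : ℕ | p ∣ α i}.Infinite) (hβ : ∀ i, 0 < β i) :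
    ∃ N : ℕ → ℕ, Monotone N ∧ (∀ i, i ≤ N i) ∧ ∀ i, Qp β i ∣ Qp α (N i) := by
  have h1 : ∀ i : ℕ, ∃ n : ℕ, Qp β i ∣ Qp α n := by
    intro i
    obtain ⟨n, hn⟩ := exists_dvd_Ico hainf (Qp β i) (Qp_pos hβ i) 0
    exact ⟨n, by rwa [← Finset.range_eq_Ico] at hn⟩
  choose N0 hN0 using h1
  refine ⟨fun i => i + ∑ j ∈ Finset.range (i + 1), N0 j, ?_, ?_, ?_⟩
  · intro a b hab
    have : (∑ j ∈ Finset.range (a + 1), N0 j) ≤ ∑ j ∈ Finset.range (b + 1), N0 j :=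
      Finset.sum_le_sum_of_subset (Finset.range_subset_range.2 (by omega))
    dsimp only; omega
  · intro i; dsimp only; omega
  · intro i
    refine (hN0 i).trans (Qp_dvd ?_)
    have : N0 i ≤ ∑ j ∈ Finset.range (i + 1), N0 j :=
      Finset.single_le_sum (fun j _ => Nat.zero_le _) (Finset.self_mem_range_succ i)
    dsimp only; omega

/-- The transfer map sending a point of Δ_α to the point of Δ_β with the
"same" value in each finite quotient. -/
def transfer (α β : ℕ → ℕ) (hβ : ∀ i, 0 < β i) (N : ℕ → ℕ)
    (x : ∀ i, Fin (α i)) (i : ℕ) : Fin (β i) :=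
  ⟨(valp α x (N (i + 1)) % Qp β (i + 1) / Qp β i) % β i, Nat.mod_lt _ (hβ i)⟩

lemma transfer_val {β : ℕ → ℕ} (hβ : ∀ i, 0 < β i) (N : ℕ → ℕ)
    (x : ∀ i, Fin (α i)) (i : ℕ) :
    (transfer α β hβ N x i).val = valp α x (N (i + 1)) % Qp β (i + 1) / Qp β i := by
  have hlt : valp α x (N (i + 1)) % Qp β (i + 1) < Qp β (i + 1) :=
    Nat.mod_lt _ (Qp_pos hβ (i + 1))
  have h2 : valp α x (N (i + 1)) % Qp β (i + 1) / Qp β i < β i := by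
    rw [Nat.div_lt_iff_lt_mul (Qp_pos hβ i)]
    calc valp α x (N (i + 1)) % Qp β (i + 1) < Qp β (i + 1) := hlt
      _ = β i * Qp β i := by rw [Qp_succ]; ring
  exact Nat.mod_eq_of_lt h2

lemma transfer_valp {β : ℕ → ℕ} (hα : ∀ i, 0 < α i) (hβ : ∀ i, 0 < β i)
    {N : ℕ → ℕ} (hmono : Monotone N) (hdvd : ∀ i, Qp β i ∣ Qp α (N i))
    (x : ∀ i, Fin (α i)) : ∀ k,
    valp β (transfer α β hβ N x) k = valp α x (N k) % Qp β k
  | 0 => by simp [valp, Qp, Nat.mod_one]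
  | (k + 1) => by
    have ih := transfer_valp hα hβ hmono hdvd x k
    rw [valp_succ, ih, transfer_val]
    have h1 : valp α x (N (k + 1)) % Qp β k = valp α x (N k) % Qp β k := by
      rw [← Nat.mod_mod_of_dvd (valp α x (N (k + 1))) (hdvd k),
        valp_mod hα x (hmono (Nat.le_succ k))]
    have h2 : valp α x (N (k + 1)) % Qp β (k + 1) % Qp β k
        = valp α x (N (k + 1)) % Qp β k :=
      Nat.mod_mod_of_dvd _ (Qp_dvd (Nat.le_succ k))
    calc valp α x (N k) % Qp β k
          + valp α x (N (k + 1)) % Qp β (k + 1) / Qp β k * Qp β k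
        = valp α x (N (k + 1)) % Qp β (k + 1) % Qp β k
          + valp α x (N (k + 1)) % Qp β (k + 1) / Qp β k * Qp β k := by rw [h2, h1]
      _ = valp α x (N (k + 1)) % Qp β (k + 1) := Nat.mod_add_div' _ _

lemma transfer_transfer {β : ℕ → ℕ} (hα : ∀ i, 0 < α i) (hβ : ∀ i, 0 < β i)
    {N M : ℕ → ℕ} (hNmono : Monotone N) (hNge : ∀ i, i ≤ N i)
    (hNdvd : ∀ i, Qp β i ∣ Qp α (N i))
    (hMge : ∀ i, i ≤ M i) (hMdvd : ∀ i, Qp α i ∣ Qp β (M i))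
    (x : ∀ i, Fin (α i)) :
    transfer β α hα M (transfer α β hβ N x) = x := by
  funext i
  apply Fin.ext
  rw [transfer_val hα M _ i, transfer_valp hα hβ hNmono hNdvd,
    Nat.mod_mod_of_dvd _ (hMdvd (i + 1)),
    valp_mod hα x (le_trans (hMge (i + 1)) (hNge (M (i + 1))))]
  exact (digit_eq hα x i).symm

lemma transfer_phi {β : ℕ → ℕ} (hα2 : ∀ i, 2 ≤ α i) (hβ2 : ∀ i, 2 ≤ β i)
    {N : ℕ → ℕ} (hmono : Monotone N)
    (hβ : ∀ i, 0 < β i) (hdvd : ∀ i, Qp β i ∣ Qp α (N i)) (x : ∀ i, Fin (α i)) :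
    transfer α β hβ N (phi α x) = phi β (transfer α β hβ N x) := by
  have hαpos : ∀ i, 0 < α i := fun i => lt_of_lt_of_le two_pos (hα2 i)
  funext i
  apply Fin.ext
  rw [transfer_val hβ N _ i, valp_phi hα2 x (N (i + 1)),
    Nat.mod_mod_of_dvd _ (hdvd (i + 1))]
  rw [digit_eq hβ (phi β (transfer α β hβ N x)) i,
    valp_phi hβ2 (transfer α β hβ N x) (i + 1),
    transfer_valp hαpos hβ hmono hdvd, Nat.mod_add_mod]

lemma continuous_transfer {β : ℕ → ℕ} (hβ : ∀ i, 0 < β i) (N : ℕ → ℕ) :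
    Continuous (transfer α β hβ N) := by
  apply continuous_pi
  intro i
  have hval : ∀ k, Continuous fun x : ∀ j, Fin (α j) => valp α x k := by
    intro k
    unfold valp
    apply continuous_finset_sum
    intro j _
    exact Continuous.comp (g := fun t : Fin (α j) => t.val * Qp α j)
      continuous_of_discreteTopology (continuous_apply j)
  exact Continuous.comp
    (g := fun v : ℕ => (⟨(v % Qp β (i + 1) / Qp β i) % β i, Nat.mod_lt _ (hβ i)⟩ : Fin (β i)))
    continuous_of_discreteTopology (hval (N (i + 1)))

end Stmt8

/-- Any two ∞-adic odometers are topologically conjugate: if every prime divides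
infinitely many of the α(i), and likewise for β, then (Δ_α, φ_α) and (Δ_β, φ_β) are
topologically conjugate. -/
theorem stmt8 (α β : ℕ → ℕ) (hα : ∀ i, 2 ≤ α i) (hβ : ∀ i, 2 ≤ β i)
    (hainf : ∀ p : ℕ, p.Prime → {i : ℕ | p ∣ α i}.Infinite)
    (hbinf : ∀ p : ℕ, p.Prime → {i : ℕ | p ∣ β i}.Infinite) :
    ∃ e : (∀ i, Fin (α i)) ≃ₜ (∀ i, Fin (β i)),
      ∀ x : ∀ i, Fin (α i), e (phi α x) = phi β (e x) := by
  have hαpos : ∀ i, 0 < α i := fun i => lt_of_lt_of_le two_pos (hα i)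
  have hβpos : ∀ i, 0 < β i := fun i => lt_of_lt_of_le two_pos (hβ i)
  obtain ⟨N, hNmono, hNge, hNdvd⟩ := Stmt8.exists_mono_N hαpos hainf hβpos
  obtain ⟨M, hMmono, hMge, hMdvd⟩ := Stmt8.exists_mono_N hβpos hbinf hαpos
  refine ⟨⟨⟨Stmt8.transfer α β hβpos N, Stmt8.transfer β α hαpos M, ?_, ?_⟩, ?_, ?_⟩, ?_⟩
  · intro x
    exact Stmt8.transfer_transfer hαpos hβpos hNmono hNge hNdvd hMge hMdvd x
  · intro y
    exact Stmt8.transfer_transfer hβpos hαpos hMmono hMge hMdvd hNge hNdvd y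
  · exact Stmt8.continuous_transfer hβpos N
  · exact Stmt8.continuous_transfer hαpos M
  · intro x
    exact Stmt8.transfer_phi hα hβ hNmono hβpos hNdvd x
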